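/- Let x = (x₁,x₂) ∈ ℝ², y = (y₁,y₂,y₃) ∈ ℝ³, and let L be a real Lie algebra with a basis e₁,…,e₆ whose brackets are those of g(x,y). Then the determinant of the 6×6 matrix (κ(e_i,e_j))_{1≤i,j≤6}, where κ is the Killing form of L, equals (4·Δ(y)·R(x,y)²)³, where Δ(y) = y₂² − 4y₁y₃ and R(x,y) = x₂²y₁ + x₁²y₃ − x₁x₂y₂. -/

import Mathlib

noncomputable section

/-- `Wpair i j v w = vᵢwⱼ − vⱼwᵢ`, the evaluation of `eⁱ∧eʲ` on `(v,w)`. -/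
def Wpair (i j : Fin 6) (v w : Fin 6 → ℝ) : ℝ := v i * w j - v j * w i

/-- The antisymmetric bilinear bracket of `g(x,y)` on `ℝ⁶`, determined (in 1-based index
notation) by `[e₃,e₅] = (x₁y₂−x₂y₁)e₁ − x₁y₁e₂`, `[e₃,e₆] = [e₄,e₅] = x₁y₃e₁ − x₂y₁e₂`,
`[e₄,e₆] = x₂y₃e₁ + (x₁y₃−x₂y₂)e₂`, `[e₁,e₅] = (x₂y₁−x₁y₂)e₃ + x₁y₁e₄`,
`[e₁,e₆] = [e₂,e₅] = −x₁y₃e₃ + x₂y₁e₄`, `[e₂,e₆] = −x₂y₃e₃ + (x₂y₂−x₁y₃)e₄`,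
`[e₁,e₃] = (x₁y₂−x₂y₁)e₅ − x₁y₁e₆`, `[e₁,e₄] = [e₂,e₃] = x₁y₃e₅ − x₂y₁e₆`,
`[e₂,e₄] = x₂y₃e₅ + (x₁y₃−x₂y₂)e₆`, `[e₁,e₂] = [e₃,e₄] = [e₅,e₆] = 0`. -/
def brXY (x : Fin 2 → ℝ) (y : Fin 3 → ℝ) (v w : Fin 6 → ℝ) : Fin 6 → ℝ :=
  ![(x 0 * y 1 - x 1 * y 0) * Wpair 2 4 v w + x 0 * y 2 * (Wpair 2 5 v w + Wpair 3 4 v w) +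
      x 1 * y 2 * Wpair 3 5 v w,
    -(x 0 * y 0 * Wpair 2 4 v w) - x 1 * y 0 * (Wpair 2 5 v w + Wpair 3 4 v w) +
      (x 0 * y 2 - x 1 * y 1) * Wpair 3 5 v w,
    (x 1 * y 0 - x 0 * y 1) * Wpair 0 4 v w - x 0 * y 2 * (Wpair 0 5 v w + Wpair 1 4 v w) -
      x 1 * y 2 * Wpair 1 5 v w,
    x 0 * y 0 * Wpair 0 4 v w + x 1 * y 0 * (Wpair 0 5 v w + Wpair 1 4 v w) +
      (x 1 * y 1 - x 0 * y 2) * Wpair 1 5 v w,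
    (x 0 * y 1 - x 1 * y 0) * Wpair 0 2 v w + x 0 * y 2 * (Wpair 0 3 v w + Wpair 1 2 v w) +
      x 1 * y 2 * Wpair 1 3 v w,
    -(x 0 * y 0 * Wpair 0 2 v w) - x 1 * y 0 * (Wpair 0 3 v w + Wpair 1 2 v w) +
      (x 0 * y 2 - x 1 * y 1) * Wpair 1 3 v w]

/-- A basis `e` of a real Lie algebra `L` realizes the brackets of `g(x,y)` if the bracket of
any two basis vectors is given by the structure constants of `brXY x y`. -/
def RealizesGXY {L : Type*} [LieRing L] [LieAlgebra ℝ L] (x : Fin 2 → ℝ) (y : Fin 3 → ℝ)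
    (e : Module.Basis (Fin 6) ℝ L) : Prop :=
  ∀ i j : Fin 6, ⁅e i, e j⁆ = ∑ k, brXY x y (Pi.single i 1) (Pi.single j 1) k • e k

private lemma cons_val_five' {α : Type*} (a b c d e f : α) :
    (![a,b,c,d,e,f] : Fin 6 → α) 5 = f := rfl
private lemma cons_val_four' {α : Type*} (a b c d e f : α) :
    (![a,b,c,d,e,f] : Fin 6 → α) 4 = e := rfl
private lemma cons_val_three' {α : Type*} (a b c d e f : α) :
    (![a,b,c,d,e,f] : Fin 6 → α) 3 = d := rfl
private lemma cons_val_two' {α : Type*} (a b c d e f : α) :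
    (![a,b,c,d,e,f] : Fin 6 → α) 2 = c := rfl
private lemma cons_val_five {α : Type*} {m : ℕ} (x : α)
    (u : Fin (m + 5) → α) : Matrix.vecCons x u 5 =
    Matrix.vecHead (Matrix.vecTail (Matrix.vecTail (Matrix.vecTail (Matrix.vecTail u)))) := rfl

set_option maxHeartbeats 2000000 in
set_option maxRecDepth 4000 in
private lemma det_block (a b d : ℝ) :
    (!![a,b,0,0,0,0; b,d,0,0,0,0; 0,0,a,b,0,0; 0,0,b,d,0,0; 0,0,0,0,a,b;
      0,0,0,0,b,d] : Matrix (Fin 6) (Fin 6) ℝ).det = (a*d - b*b)^3 := by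
  simp [Matrix.det_succ_row_zero, Fin.sum_univ_succ, Fin.succAbove,
    Matrix.vecHead, Matrix.vecTail, cons_val_five]
  ring

set_option maxHeartbeats 4000000 in
/-- The determinant of the Gram matrix of the Killing form of `g(x,y)` in the adapted basis
is `(4 Δ(y) R(x,y)²)³`. -/
theorem stmt5 (x : Fin 2 → ℝ) (y : Fin 3 → ℝ) (L : Type*) [LieRing L] [LieAlgebra ℝ L]
    [Module.Finite ℝ L] (e : Module.Basis (Fin 6) ℝ L) (he : RealizesGXY x y e) :
    (Matrix.of fun i j : Fin 6 => killingForm ℝ L (e i) (e j)).det =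
      (4 * (y 1 ^ 2 - 4 * y 0 * y 2) *
        (x 1 ^ 2 * y 0 + x 0 ^ 2 * y 2 - x 0 * x 1 * y 1) ^ 2) ^ 3 := by
  classical
  have hκ : ∀ i j : Fin 6, killingForm ℝ L (e i) (e j) = ∑ m : Fin 6, ∑ k : Fin 6,
      brXY x y (Pi.single i 1) (Pi.single m 1) k *
      brXY x y (Pi.single j 1) (Pi.single k 1) m := by
    intro i j
    have hrep : ∀ a b k, e.repr ⁅e a, e b⁆ k = brXY x y (Pi.single a 1) (Pi.single b 1) k := by
      intro a b k
      rw [he a b]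
      simp [Finsupp.single_apply]
    rw [killingForm_apply_apply, LinearMap.trace_eq_matrix_trace ℝ e,
      LinearMap.toMatrix_comp e e, Matrix.trace]
    simp only [Matrix.mul_apply, LinearMap.toMatrix_apply, Matrix.diag, LieHom.coe_toLinearMap,
      LieAlgebra.ad_apply, hrep]
    rw [Finset.sum_comm]
  have hM : (Matrix.of fun i j : Fin 6 => killingForm ℝ L (e i) (e j)) =
      !![4*x 0^2*y 0*y 2 - 2*x 0^2*y 1^2 + 4*x 0*x 1*y 0*y 1 - 4*x 1^2*y 0^2,
         8*x 0*x 1*y 0*y 2 - 2*x 1^2*y 0*y 1 - 2*x 0^2*y 1*y 2, 0, 0, 0, 0;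
         8*x 0*x 1*y 0*y 2 - 2*x 1^2*y 0*y 1 - 2*x 0^2*y 1*y 2,
         4*x 1^2*y 0*y 2 - 2*x 1^2*y 1^2 + 4*x 0*x 1*y 1*y 2 - 4*x 0^2*y 2^2, 0, 0, 0, 0;
         0, 0, 4*x 0^2*y 0*y 2 - 2*x 0^2*y 1^2 + 4*x 0*x 1*y 0*y 1 - 4*x 1^2*y 0^2,
         8*x 0*x 1*y 0*y 2 - 2*x 1^2*y 0*y 1 - 2*x 0^2*y 1*y 2, 0, 0;
         0, 0, 8*x 0*x 1*y 0*y 2 - 2*x 1^2*y 0*y 1 - 2*x 0^2*y 1*y 2,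
         4*x 1^2*y 0*y 2 - 2*x 1^2*y 1^2 + 4*x 0*x 1*y 1*y 2 - 4*x 0^2*y 2^2, 0, 0;
         0, 0, 0, 0, 4*x 0^2*y 0*y 2 - 2*x 0^2*y 1^2 + 4*x 0*x 1*y 0*y 1 - 4*x 1^2*y 0^2,
         8*x 0*x 1*y 0*y 2 - 2*x 1^2*y 0*y 1 - 2*x 0^2*y 1*y 2;
         0, 0, 0, 0, 8*x 0*x 1*y 0*y 2 - 2*x 1^2*y 0*y 1 - 2*x 0^2*y 1*y 2,
         4*x 1^2*y 0*y 2 - 2*x 1^2*y 1^2 + 4*x 0*x 1*y 1*y 2 - 4*x 0^2*y 2^2] := by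
    ext i j
    fin_cases i <;> fin_cases j <;>
      · rw [Matrix.of_apply, hκ]
        simp [Fin.sum_univ_six, brXY, Wpair, Pi.single_apply, cons_val_two', cons_val_three',
          cons_val_four', cons_val_five', cons_val_five, Matrix.vecHead, Matrix.vecTail]
        try ring
  rw [hM, det_block]
  ring
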